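/- (Monad laws for step functions) With return := const, map, and join as defined, step functions form a monad up to the lifted equality ≍: for every type X, (i) join (const f) ≍ f for all f : S X; (ii) join (map const f) ≍ f for all f : S X; and (iii) join (join ff) ≍ join (map join ff) for all ff : S (S (S X)). -/

import Mathlib

set_option linter.unusedVariables false

/-- Rationals strictly between 0 and 1. -/
abbrev OO : Type := {q : ℚ // 0 < q ∧ q < 1}

/-- Rational step functions on the unit interval with values in `X`. -/
inductive S (X : Type) : Type
  | const : X → S X
  | glue : OO → S X → S X → S X

namespace S

def divO (a o : OO) (h : a.1 < o.1) : OO :=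
  ⟨a.1 / o.1, div_pos a.2.1 o.2.1, (div_lt_one o.2.1).2 h⟩

def subO (a o : OO) (h : o.1 < a.1) : OO :=
  ⟨(a.1 - o.1) / (1 - o.1),
    div_pos (by linarith) (by linarith [o.2.2]),
    (div_lt_one (by linarith [o.2.2])).2 (by linarith [a.2.2])⟩

/-- Left split: the part of the step function on `[0,a]`, rescaled to `[0,1]`. -/
def splitL {X : Type} : S X → OO → S X
  | const x, _ => const x
  | glue o f g, a =>
      if h : a.1 < o.1 then splitL f (divO a o h)
      else if h' : o.1 < a.1 then glue (divO o a h') f (splitL g (subO a o h'))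
      else f

/-- Right split: the part of the step function on `[a,1]`, rescaled to `[0,1]`. -/
def splitR {X : Type} : S X → OO → S X
  | const x, _ => const x
  | glue o f g, a =>
      if h : a.1 < o.1 then glue (subO o a h) (splitR f (divO a o h)) g
      else if h' : o.1 < a.1 then splitR g (subO a o h')
      else g

/-- The catamorphism (fold) for step functions. -/
def fold {X Y : Type} (φ : X → Y) (ψ : OO → Y → Y → Y) : S X → Y
  | const x => φ x
  | glue o f g => ψ o (fold φ ψ f) (fold φ ψ g)

/-- `map` for step functions. -/
def mapS {X Y : Type} (f : X → Y) : S X → S Y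
  | const x => const (f x)
  | glue o l r => glue o (mapS f l) (mapS f r)

/-- The applicative `ap` (pointwise application) for step functions. -/
def ap {X Y : Type} : S (X → Y) → S X → S Y
  | const f, x => mapS f x
  | glue o fl fr, x => glue o (ap fl (splitL x o)) (ap fr (splitR x o))

/-- Binary map. -/
def map2 {X Y Z : Type} (f : X → Y → Z) (a : S X) (b : S Y) : S Z :=
  ap (mapS f a) b

/-- `fold⋆`: a step function of propositions holds everywhere. -/
def foldStar : S Prop → Prop := fold id (fun _ p q => p ∧ q)

/-- Lifting of a relation to step functions: it holds pointwise everywhere. -/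
def liftRel {X Y : Type} (R : X → Y → Prop) (f : S X) (g : S Y) : Prop :=
  foldStar (map2 R f g)

/-- The equivalence `≍` on step functions: the lifting of equality. -/
def equivS {X : Type} (f g : S X) : Prop := liftRel Eq f g

def foldSup : S ℚ → ℚ := fold id (fun _ x y => max x y)

def foldAffine : S ℚ → ℚ := fold id (fun o x y => o.1 * x + (1 - o.1) * y)

def normInf (f : S ℚ) : ℚ := foldSup (mapS (fun q => |q|) f)

def normOne (f : S ℚ) : ℚ := foldAffine (mapS (fun q => |q|) f)

def dInf (f g : S ℚ) : ℚ := normInf (map2 (· - ·) f g)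

def dOne (f g : S ℚ) : ℚ := normOne (map2 (· - ·) f g)

end S

open S

namespace S

def depth {X : Type} : S X → ℕ
  | const _ => 0
  | glue _ f g => max (depth f) (depth g) + 1

theorem depth_mapS {X Y : Type} (f : X → Y) (s : S X) :
    depth (mapS f s) = depth s := by
  induction s with
  | const x => rfl
  | glue o l r ihl ihr => simp [mapS, depth, ihl, ihr]

/-- The monadic `join` of the step-function monad. -/
def joinS {X : Type} : S (S X) → S X
  | const f => f
  | glue o f g =>
      glue o (joinS (mapS (fun x => splitL x o) f))
             (joinS (mapS (fun x => splitR x o) g))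
  termination_by s => depth s
  decreasing_by
    all_goals simp only [depth_mapS, depth]; omega

end S

namespace S

/-- Evaluation of a step function at a point of `[0,1)`. -/
def evalS {X : Type} : S X → ℚ → X
  | const x, _ => x
  | glue o f g, q =>
      if q < o.1 then evalS f (q / o.1) else evalS g ((q - o.1) / (1 - o.1))

theorem evalS_mapS {X Y : Type} (f : X → Y) (s : S X) (q : ℚ) :
    evalS (mapS f s) q = f (evalS s q) := by
  induction s generalizing q with
  | const x => rfl
  | glue o l r ihl ihr =>
      simp only [mapS, evalS]
      split <;> simp [ihl, ihr]

theorem evalS_splitL {X : Type} (s : S X) (a : OO) (q : ℚ)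
    (hq0 : 0 ≤ q) (hq1 : q < 1) :
    evalS (splitL s a) q = evalS s (q * a.1) := by
  induction s generalizing a q with
  | const x => rfl
  | glue o f g ihf ihg =>
      obtain ⟨a, ha0, ha1⟩ := a
      obtain ⟨o, ho0, ho1⟩ := o
      simp only [splitL, evalS]
      rcases lt_trichotomy a o with h | h | h
      · rw [dif_pos h]
        have hqa : q * a < o := lt_of_le_of_lt (by nlinarith) h
        rw [ihf _ _ hq0 hq1, if_pos hqa]
        congr 1
        simp [divO]
        field_simp
      · subst h
        rw [dif_neg (lt_irrefl _), dif_neg (lt_irrefl _)]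
        have hqa : q * a < a := by nlinarith
        rw [if_pos hqa]
        congr 1
        field_simp
      · rw [dif_neg (by linarith), dif_pos h]
        simp only [evalS, divO]
        by_cases hc : q < o / a
        · simp only [hc, ↓reduceIte]
          have : q * a < o := by
            rw [lt_div_iff₀ ha0] at hc; linarith
          rw [if_pos this]
          congr 1
          field_simp
        · simp only [hc, ↓reduceIte]
          have hc' : o / a ≤ q := le_of_not_gt hc
          have hoa : o ≤ q * a := by
            rw [div_le_iff₀ ha0] at hc'; linarith
          have : ¬ q * a < o := not_lt.2 hoa
          rw [if_neg this]
          have h1 : (0:ℚ) < 1 - o / a := by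
            have : o / a < 1 := (div_lt_one ha0).2 h
            linarith
          have hq' : 0 ≤ (q - o / a) / (1 - o / a) :=
            div_nonneg (by linarith) (le_of_lt h1)
          have hq'' : (q - o / a) / (1 - o / a) < 1 := by
            rw [div_lt_one h1]; linarith
          rw [ihg _ _ hq' hq'']
          congr 1
          simp only [subO]
          have hao : (0:ℚ) < a - o := by linarith
          have h1o : (0:ℚ) < 1 - o := by linarith
          field_simp

theorem evalS_splitR {X : Type} (s : S X) (a : OO) (q : ℚ)
    (hq0 : 0 ≤ q) (hq1 : q < 1) :
    evalS (splitR s a) q = evalS s (a.1 + q * (1 - a.1)) := by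
  induction s generalizing a q with
  | const x => rfl
  | glue o f g ihf ihg =>
      obtain ⟨a, ha0, ha1⟩ := a
      obtain ⟨o, ho0, ho1⟩ := o
      simp only [splitR, evalS]
      rcases lt_trichotomy a o with h | h | h
      · rw [dif_pos h]
        simp only [evalS, subO]
        have h1a : (0:ℚ) < 1 - a := by linarith
        have hoa : (0:ℚ) < o - a := by linarith
        by_cases hc : q < (o - a) / (1 - a)
        · simp only [hc, ↓reduceIte]
          have ht : a + q * (1 - a) < o := by
            rw [lt_div_iff₀ h1a] at hc; nlinarith
          rw [if_pos ht]
          have hq' : 0 ≤ q / ((o - a) / (1 - a)) := by positivity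
          have hq'' : q / ((o - a) / (1 - a)) < 1 := by
            rw [div_lt_one (by positivity)]; linarith [hc]
          rw [ihf _ _ hq' hq'']
          congr 1
          simp only [divO]
          field_simp
        · simp only [hc, ↓reduceIte]
          have hc' : (o - a) / (1 - a) ≤ q := le_of_not_gt hc
          have ht : ¬ a + q * (1 - a) < o := by
            rw [div_le_iff₀ h1a] at hc'; push_neg; nlinarith
          rw [if_neg ht]
          congr 1
          have h1o : (0:ℚ) < 1 - o := by linarith
          rw [div_eq_div_iff (by rw [sub_ne_zero]; exact ne_of_gt ((div_lt_one h1a).2 (by linarith))) h1o.ne']; field_simp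
          ring
      · subst h
        rw [dif_neg (lt_irrefl _), dif_neg (lt_irrefl _)]
        have ht : ¬ a + q * (1 - a) < a := by nlinarith
        rw [if_neg ht]
        congr 1
        have h1a : (0:ℚ) < 1 - a := by linarith
        field_simp; ring
      · rw [dif_neg (by linarith), dif_pos h]
        have h1o : (0:ℚ) < 1 - o := by linarith
        have hq' : 0 ≤ (a - o) / (1 - o) := div_nonneg (by linarith) (le_of_lt h1o)
        have hsub : ((a - o) / (1 - o) : ℚ) < 1 := by
          rw [div_lt_one h1o]; linarith
        rw [ihg _ _ hq0 hq1]
        have ht : ¬ a + q * (1 - a) < o := by nlinarith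
        rw [if_neg ht]
        congr 1
        simp only [subO]
        field_simp
        ring

theorem evalS_ap {X Y : Type} (F : S (X → Y)) (x : S X) (q : ℚ)
    (hq0 : 0 ≤ q) (hq1 : q < 1) :
    evalS (ap F x) q = evalS F q (evalS x q) := by
  induction F generalizing x q with
  | const f => simp [ap, evalS, evalS_mapS]
  | glue o Fl Fr ihl ihr =>
      obtain ⟨o, ho0, ho1⟩ := o
      simp only [ap, evalS]
      by_cases hc : q < o
      · rw [if_pos hc, if_pos hc]
        have hq' : 0 ≤ q / o := by positivity
        have hq'' : q / o < 1 := (div_lt_one ho0).2 hc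
        rw [ihl _ _ hq' hq'', evalS_splitL _ _ _ hq' hq'']
        field_simp
      · rw [if_neg hc, if_neg hc]
        have h1o : (0:ℚ) < 1 - o := by linarith
        push_neg at hc
        have hq' : 0 ≤ (q - o) / (1 - o) := div_nonneg (by linarith) (le_of_lt h1o)
        have hq'' : (q - o) / (1 - o) < 1 := by rw [div_lt_one h1o]; linarith
        rw [ihr _ _ hq' hq'', evalS_splitR _ _ _ hq' hq'']
        field_simp; rw [add_sub_cancel]

theorem foldStar_of_evalS (s : S Prop)
    (h : ∀ q : ℚ, 0 ≤ q → q < 1 → evalS s q) : foldStar s := by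
  induction s with
  | const P => exact h 0 le_rfl one_pos
  | glue o p p' ihp ihp' =>
      obtain ⟨o, ho0, ho1⟩ := o
      constructor
      · apply ihp
        intro q hq0 hq1
        have := h (q * o) (by positivity) (by nlinarith)
        simp only [evalS] at this
        rw [if_pos (by nlinarith)] at this
        rwa [mul_div_assoc, div_self (ne_of_gt ho0), mul_one] at this
      · apply ihp'
        intro q hq0 hq1
        have h1o : (0:ℚ) < 1 - o := by linarith
        have := h (o + q * (1 - o)) (by nlinarith) (by nlinarith)
        simp only [evalS] at this
        rw [if_neg (by push_neg; nlinarith)] at this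
        have heq : (o + q * (1 - o) - o) / (1 - o) = q := by field_simp; ring
        rwa [heq] at this

theorem equivS_of_evalS {X : Type} (f g : S X)
    (h : ∀ q : ℚ, 0 ≤ q → q < 1 → evalS f q = evalS g q) : equivS f g := by
  apply foldStar_of_evalS
  intro q hq0 hq1
  unfold map2
  rw [evalS_ap _ _ _ hq0 hq1, evalS_mapS]
  exact h q hq0 hq1

theorem evalS_joinS {X : Type} (ff : S (S X)) (q : ℚ)
    (hq0 : 0 ≤ q) (hq1 : q < 1) :
    evalS (joinS ff) q = evalS (evalS ff q) q := by
  induction ff using joinS.induct generalizing q with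
  | case1 f => rw [joinS]; rfl
  | case2 o f g ihf ihg =>
      obtain ⟨o, ho0, ho1⟩ := o
      simp only [joinS, evalS]
      by_cases hc : q < o
      · rw [if_pos hc, if_pos hc]
        have hq' : 0 ≤ q / o := by positivity
        have hq'' : q / o < 1 := (div_lt_one ho0).2 hc
        rw [ihf _ hq' hq'', evalS_mapS]
        rw [evalS_splitL _ _ _ hq' hq'']
        congr 1
        field_simp
      · rw [if_neg hc, if_neg hc]
        have h1o : (0:ℚ) < 1 - o := by linarith
        push_neg at hc
        have hq' : 0 ≤ (q - o) / (1 - o) := div_nonneg (by linarith) (le_of_lt h1o)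
        have hq'' : (q - o) / (1 - o) < 1 := by rw [div_lt_one h1o]; linarith
        rw [ihg _ hq' hq'', evalS_mapS]
        rw [evalS_splitR _ _ _ hq' hq'']
        congr 1
        field_simp; ring

end S

open S in
/-- The monad laws for step functions, up to the lifted equality. -/
theorem step_monad_laws {X : Type} :
    (∀ f : S X, equivS (joinS (S.const f)) f) ∧
    (∀ f : S X, equivS (joinS (mapS S.const f)) f) ∧
    (∀ ff : S (S (S X)), equivS (joinS (joinS ff)) (joinS (mapS joinS ff))) := by
  refine ⟨?_, ?_, ?_⟩
  · intro f
    apply equivS_of_evalS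
    intro q hq0 hq1
    rw [joinS]
  · intro f
    apply equivS_of_evalS
    intro q hq0 hq1
    rw [evalS_joinS _ _ hq0 hq1, evalS_mapS]
    rfl
  · intro ff
    apply equivS_of_evalS
    intro q hq0 hq1
    rw [evalS_joinS _ _ hq0 hq1, evalS_joinS _ _ hq0 hq1,
        evalS_joinS _ _ hq0 hq1, evalS_mapS, evalS_joinS _ _ hq0 hq1]
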